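/- Let k ≥ 3. The bottom of the spectrum of the k-cycle with the natural weights equals (1/2)|1 − e^{2πi/k}|²; explicitly, the infimum, over all nonconstant functions g : ZMod k → ℝ, of the Rayleigh quotient [Σ_{j ∈ ZMod k} (g(j+1) − g(j))²] / [2 · Σ_{j ∈ ZMod k} (g(j) − μ(g))²], where μ(g) = (1/k) Σ_{j ∈ ZMod k} g(j), is equal to 1 − cos(2π/k). -/

import Mathlib

open Complex Finset

namespace CycleAux

variable {n : ℕ} [NeZero n]

noncomputable def χ (n : ℕ) [NeZero n] : AddChar (ZMod n) ℂ := ZMod.stdAddChar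

lemma conj_chi (a : ZMod n) : (starRingEnd ℂ) (χ n a) = χ n (-a) := by
  have h1 : χ n a * χ n (-a) = 1 := by
    rw [← AddChar.map_add_eq_mul]; simp
  have h2 : χ n a * (starRingEnd ℂ) (χ n a) = 1 := by
    rw [Complex.mul_conj]
    norm_cast
    rw [χ, ZMod.stdAddChar_apply, Complex.normSq_eq_norm_sq, Circle.norm_coe]
    norm_num
  have h3 : χ n a ≠ 0 := by
    intro h; rw [h, zero_mul] at h1; exact one_ne_zero h1.symm
  exact mul_left_cancel₀ h3 (h2.trans h1.symm)

lemma sum_chi (t : ZMod n) : ∑ j : ZMod n, χ n (t * j) = if t = 0 then (n : ℂ) else 0 := by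
  split_ifs with h
  · simp [h, χ, Finset.card_univ, ZMod.card]
  · have hp := ZMod.isPrimitive_stdAddChar n h
    simpa [χ] using AddChar.sum_eq_zero_of_ne_one hp

noncomputable def dftF (y : ZMod n → ℝ) (m : ZMod n) : ℂ :=
  ∑ j : ZMod n, χ n (j * m) * (y j : ℂ)

lemma parseval (y : ZMod n → ℝ) :
    ∑ m : ZMod n, Complex.normSq (dftF y m) = n * ∑ j : ZMod n, (y j) ^ 2 := by
  have key : ∑ m : ZMod n, (starRingEnd ℂ) (dftF y m) * dftF y m
      = (n : ℂ) * ∑ j : ZMod n, ((y j : ℂ)) ^ 2 := by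
    have conjF : ∀ m, (starRingEnd ℂ) (dftF y m)
        = ∑ l : ZMod n, χ n (-(l * m)) * (y l : ℂ) := by
      intro m
      rw [dftF, map_sum]
      exact Finset.sum_congr rfl fun l _ => by rw [map_mul, conj_chi, Complex.conj_ofReal]
    calc ∑ m : ZMod n, (starRingEnd ℂ) (dftF y m) * dftF y m
        = ∑ m : ZMod n, ∑ l : ZMod n, ∑ j : ZMod n,
            χ n ((j - l) * m) * ((y l : ℂ) * (y j : ℂ)) := by
          refine sum_congr rfl fun m _ => ?_
          rw [conjF, dftF, sum_mul]
          refine sum_congr rfl fun l _ => ?_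
          rw [mul_sum]
          refine sum_congr rfl fun j _ => ?_
          rw [show ((j - l) * m : ZMod n) = -(l * m) + j * m by ring,
            AddChar.map_add_eq_mul]
          ring
      _ = ∑ l : ZMod n, ∑ j : ZMod n,
            ((y l : ℂ) * (y j : ℂ)) * ∑ m : ZMod n, χ n ((j - l) * m) := by
          rw [sum_comm]
          refine sum_congr rfl fun l _ => ?_
          rw [sum_comm]
          refine sum_congr rfl fun j _ => ?_
          rw [mul_sum]
          exact sum_congr rfl fun m _ => by ring
      _ = ∑ l : ZMod n, ∑ j : ZMod n,
            ((y l : ℂ) * (y j : ℂ)) * (if j = l then (n : ℂ) else 0) := by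
          refine sum_congr rfl fun l _ => sum_congr rfl fun j _ => ?_
          rw [sum_chi]
          simp only [sub_eq_zero]
      _ = (n : ℂ) * ∑ j : ZMod n, ((y j : ℂ)) ^ 2 := by
          rw [mul_sum]
          refine sum_congr rfl fun l _ => ?_
          rw [Finset.sum_eq_single l (fun b _ hb => by rw [if_neg hb, mul_zero])
            (fun h => absurd (mem_univ l) h)]
          rw [if_pos rfl]; ring
  have : ((∑ m : ZMod n, Complex.normSq (dftF y m) : ℝ) : ℂ)
      = ((n * ∑ j : ZMod n, (y j) ^ 2 : ℝ) : ℂ) := by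
    push_cast
    rw [← key]
    exact Finset.sum_congr rfl fun m _ => by rw [← Complex.normSq_eq_conj_mul_self]
  exact_mod_cast this

lemma dftF_shift (y : ZMod n → ℝ) (m : ZMod n) :
    dftF (fun j => y (j + 1) - y j) m = (χ n (-m) - 1) * dftF y m := by
  have h1 : dftF (fun j => y (j + 1)) m = χ n (-m) * dftF y m := by
    rw [dftF, dftF, mul_sum]
    refine Fintype.sum_equiv (Equiv.addRight (1 : ZMod n)) _ _ fun j => ?_
    simp only [Equiv.coe_addRight]
    rw [← mul_assoc, ← AddChar.map_add_eq_mul,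
      show (-m + (j + 1) * m : ZMod n) = j * m by ring]
  have h2 : dftF (fun j => y (j + 1) - y j) m
      = dftF (fun j => y (j + 1)) m - dftF y m := by
    rw [dftF, dftF, dftF, ← Finset.sum_sub_distrib]
    refine sum_congr rfl fun j _ => ?_
    push_cast; ring
  rw [h2, h1]; ring

lemma normSq_chi_sub_one (a : ZMod n) :
    Complex.normSq (χ n a - 1) = 2 - 2 * Real.cos (2 * Real.pi * a.val / n) := by
  rw [χ, ZMod.stdAddChar_apply, ZMod.toCircle_apply]
  rw [show (2 * ↑Real.pi * I * (a.val : ℂ) / (n : ℂ))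
      = ((2 * Real.pi * a.val / n : ℝ) : ℂ) * I by push_cast; ring]
  rw [Complex.exp_mul_I]
  set θ := 2 * Real.pi * a.val / n
  rw [Complex.normSq_apply]
  simp [Complex.cos_ofReal_re, Complex.sin_ofReal_re]
  nlinarith [Real.sin_sq_add_cos_sq θ]

lemma normSq_chi_neg_sub_one (a : ZMod n) :
    Complex.normSq (χ n (-a) - 1) = Complex.normSq (χ n a - 1) := by
  calc Complex.normSq (χ n (-a) - 1)
      = Complex.normSq ((starRingEnd ℂ) (χ n a - 1)) := by
        rw [map_sub (starRingEnd ℂ), map_one, conj_chi]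
    _ = Complex.normSq (χ n a - 1) := Complex.normSq_conj _

lemma cos_bound (hk : 3 ≤ n) {m : ZMod n} (hm : m ≠ 0) :
    Real.cos (2 * Real.pi * m.val / n) ≤ Real.cos (2 * Real.pi / n) := by
  have hn : (0:ℝ) < n := by positivity
  have hv1 : 1 ≤ m.val := Nat.one_le_iff_ne_zero.2 (by
    simpa [ZMod.val_eq_zero] using hm)
  have hv2 : (m.val : ℝ) ≤ n - 1 := by
    have := ZMod.val_lt m
    have : m.val ≤ n - 1 := Nat.le_sub_one_of_lt this
    calc (m.val : ℝ) ≤ ((n - 1 : ℕ) : ℝ) := by exact_mod_cast this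
      _ ≤ n - 1 := by
          rw [Nat.cast_sub (by omega)]; norm_num
  set a := 2 * Real.pi / n with ha
  set x := 2 * Real.pi * m.val / n with hx
  have hpi := Real.pi_pos
  have ha0 : 0 < a := by positivity
  have hapi : a ≤ 2 * Real.pi / 3 := by
    rw [ha, div_le_div_iff₀ hn (by norm_num)]
    nlinarith [(show (3:ℝ) ≤ n by exact_mod_cast hk)]
  have hapi' : a < Real.pi := lt_of_le_of_lt hapi (by nlinarith)
  have hax : a ≤ x := by
    rw [ha, hx, div_le_div_iff₀ hn hn]
    have : (1:ℝ) ≤ m.val := by exact_mod_cast hv1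
    nlinarith [mul_le_mul_of_nonneg_left this
      (show (0:ℝ) ≤ 2 * Real.pi * (n:ℝ) by positivity)]
  have hxa : x ≤ 2 * Real.pi - a := by
    have he : 2 * Real.pi - a = 2 * Real.pi * ((n:ℝ) - 1) / n := by
      rw [ha]; field_simp
    rw [hx, he]
    gcongr
  by_cases hxpi : x ≤ Real.pi
  · exact Real.cos_le_cos_of_nonneg_of_le_pi ha0.le hxpi hax
  · have hc : Real.cos x = Real.cos (2 * Real.pi - x) := by
      rw [Real.cos_two_pi_sub]
    rw [hc]
    exact Real.cos_le_cos_of_nonneg_of_le_pi ha0.le (by linarith) (by linarith)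

lemma val_one' (hk : 3 ≤ n) : ((1 : ZMod n)).val = 1 := ZMod.val_one_eq_one_mod n ▸ by
  rw [Nat.mod_eq_of_lt (by omega)]

lemma normSq_chi_one_sub_one (hk : 3 ≤ n) :
    Complex.normSq (χ n 1 - 1) = 2 - 2 * Real.cos (2 * Real.pi / n) := by
  rw [normSq_chi_sub_one, val_one' hk]
  norm_num

lemma key_ineq (hk : 3 ≤ n) (y : ZMod n → ℝ) (hy : ∑ j : ZMod n, y j = 0) :
    (2 - 2 * Real.cos (2 * Real.pi / n)) * ∑ j : ZMod n, (y j) ^ 2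
      ≤ ∑ j : ZMod n, (y (j + 1) - y j) ^ 2 := by
  have hn : (0:ℝ) < n := by positivity
  have hF0 : dftF y 0 = 0 := by
    rw [dftF]
    simp only [mul_zero, AddChar.map_zero_eq_one, one_mul]
    exact_mod_cast congrArg (Complex.ofReal) hy
  have step : ∀ m : ZMod n,
      (2 - 2 * Real.cos (2 * Real.pi / n)) * Complex.normSq (dftF y m)
        ≤ Complex.normSq (dftF (fun j => y (j + 1) - y j) m) := by
    intro m
    rw [dftF_shift, Complex.normSq_mul, normSq_chi_neg_sub_one, normSq_chi_sub_one]
    by_cases hm : m = 0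
    · simp [hm, hF0]
    · exact mul_le_mul_of_nonneg_right (by linarith [cos_bound hk hm])
        (Complex.normSq_nonneg _)
  have hsum := Finset.sum_le_sum (fun m (_ : m ∈ univ) => step m)
  rw [← Finset.mul_sum, parseval, parseval] at hsum
  set c := 2 - 2 * Real.cos (2 * Real.pi / n)
  have h2 : (n:ℝ) * (c * ∑ j : ZMod n, (y j) ^ 2)
      ≤ (n:ℝ) * ∑ j : ZMod n, (y (j + 1) - y j) ^ 2 := by
    calc (n:ℝ) * (c * ∑ j : ZMod n, (y j) ^ 2)
        = c * ((n:ℝ) * ∑ j : ZMod n, (y j) ^ 2) := by ring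
      _ ≤ _ := hsum
  exact le_of_mul_le_mul_left h2 hn

-- the quadratic character sum
lemma sum_quad (hk : 3 ≤ n) (a b : ℂ) :
    ∑ j : ZMod n, (a * χ n j + b * χ n (-j)) ^ 2 = 2 * n * (a * b) := by
  have h2 : (2 : ZMod n) ≠ 0 := by
    intro h
    have : (n:ℕ) ∣ 2 := by
      have := (ZMod.natCast_eq_zero_iff 2 n).mp (by exact_mod_cast h)
      exact this
    exact absurd (Nat.le_of_dvd (by norm_num) this) (by omega)
  have hm2 : (-2 : ZMod n) ≠ 0 := fun h => h2 (neg_eq_zero.mp h)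
  have expand : ∀ j : ZMod n, (a * χ n j + b * χ n (-j)) ^ 2
      = a ^ 2 * χ n (2 * j) + b ^ 2 * χ n (-2 * j) + 2 * (a * b) := by
    intro j
    have e1 : χ n j * χ n j = χ n (2 * j) := by
      rw [← AddChar.map_add_eq_mul]; ring_nf
    have e2 : χ n (-j) * χ n (-j) = χ n (-2 * j) := by
      rw [← AddChar.map_add_eq_mul]; ring_nf
    have e3 : χ n j * χ n (-j) = 1 := by
      rw [← AddChar.map_add_eq_mul]; simp
    linear_combination a ^ 2 * e1 + b ^ 2 * e2 + 2 * a * b * e3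
  calc ∑ j : ZMod n, (a * χ n j + b * χ n (-j)) ^ 2
      = ∑ j : ZMod n, (a ^ 2 * χ n (2 * j) + b ^ 2 * χ n (-2 * j) + 2 * (a * b)) :=
        Finset.sum_congr rfl fun j _ => expand j
    _ = a ^ 2 * ∑ j : ZMod n, χ n (2 * j) + b ^ 2 * ∑ j : ZMod n, χ n (-2 * j)
          + (n : ℂ) * (2 * (a * b)) := by
        rw [Finset.sum_add_distrib, Finset.sum_add_distrib, ← Finset.mul_sum,
          ← Finset.mul_sum, Finset.sum_const, Finset.card_univ, ZMod.card]
        push_cast; ring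
    _ = 2 * n * (a * b) := by
        rw [sum_chi, sum_chi, if_neg h2, if_neg hm2]; ring

noncomputable def gfun (n : ℕ) [NeZero n] : ZMod n → ℝ := fun j => (χ n j).re

lemma one_ne_zero' (hk : 3 ≤ n) : (1 : ZMod n) ≠ 0 := by
  intro h
  have : (n:ℕ) ∣ 1 := (ZMod.natCast_eq_zero_iff 1 n).mp (by exact_mod_cast h)
  exact absurd (Nat.le_of_dvd one_pos this) (by omega)

lemma gfun_cast (j : ZMod n) :
    ((gfun n j : ℝ) : ℂ) = (1/2) * χ n j + (1/2) * χ n (-j) := by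
  have h := Complex.add_conj (χ n j)
  rw [conj_chi] at h
  push_cast at h
  rw [gfun]
  linear_combination -h / 2

lemma sum_gfun (hk : 3 ≤ n) : ∑ j : ZMod n, gfun n j = 0 := by
  have : ∑ j : ZMod n, χ n j = 0 := by
    have := sum_chi (n := n) 1
    rw [if_neg (one_ne_zero' hk)] at this
    simpa using this
  calc ∑ j : ZMod n, gfun n j = (∑ j : ZMod n, χ n j).re := (Complex.re_sum _ _).symm
    _ = 0 := by rw [this]; rfl

lemma sum_gfun_sq (hk : 3 ≤ n) : ∑ j : ZMod n, (gfun n j) ^ 2 = n / 2 := by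
  have : ((∑ j : ZMod n, (gfun n j) ^ 2 : ℝ) : ℂ) = ((n / 2 : ℝ) : ℂ) := by
    push_cast
    calc ∑ j : ZMod n, ((gfun n j : ℝ) : ℂ) ^ 2
        = ∑ j : ZMod n, ((1/2) * χ n j + (1/2) * χ n (-j)) ^ 2 :=
          Finset.sum_congr rfl fun j _ => by rw [gfun_cast]
      _ = 2 * n * ((1/2) * (1/2)) := sum_quad hk _ _
      _ = (n : ℂ) / 2 := by ring
  exact_mod_cast this

lemma sum_gfun_diff_sq (hk : 3 ≤ n) :
    ∑ j : ZMod n, (gfun n (j + 1) - gfun n j) ^ 2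
      = n * (1 - Real.cos (2 * Real.pi / n)) := by
  set c : ℂ := χ n 1 with hc
  have hshift : ∀ j : ZMod n, ((gfun n (j+1) - gfun n j : ℝ) : ℂ)
      = ((c - 1)/2) * χ n j + (((starRingEnd ℂ) c - 1)/2) * χ n (-j) := by
    intro j
    push_cast
    rw [gfun_cast, gfun_cast]
    have e1 : χ n (j + 1) = χ n j * c := by rw [hc, ← AddChar.map_add_eq_mul]
    have e2 : χ n (-(j + 1)) = χ n (-j) * (starRingEnd ℂ) c := by
      rw [hc, conj_chi, ← AddChar.map_add_eq_mul]; ring_nf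
    rw [e1, e2]; ring
  have key : ((∑ j : ZMod n, (gfun n (j + 1) - gfun n j) ^ 2 : ℝ) : ℂ)
      = ((n * (1 - Real.cos (2 * Real.pi / n)) : ℝ) : ℂ) := by
    push_cast
    calc ∑ j : ZMod n, ((gfun n (j+1) : ℂ) - (gfun n j : ℂ)) ^ 2
        = ∑ j : ZMod n, (((c - 1)/2) * χ n j + (((starRingEnd ℂ) c - 1)/2) * χ n (-j)) ^ 2 := by
          refine Finset.sum_congr rfl fun j _ => ?_
          rw [← hshift j]; push_cast; ring
      _ = 2 * n * (((c - 1)/2) * (((starRingEnd ℂ) c - 1)/2)) := sum_quad hk _ _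
      _ = (n : ℂ) * ((c - 1) * (starRingEnd ℂ) (c - 1)) / 2 := by
          rw [map_sub, map_one]; ring
      _ = (n : ℂ) * (1 - Complex.cos (2 * (Real.pi : ℂ) / n)) := by
          rw [Complex.mul_conj, normSq_chi_one_sub_one hk]
          push_cast
          ring
  exact_mod_cast key

lemma gfun_zero : gfun n 0 = 1 := by
  rw [gfun, AddChar.map_zero_eq_one]; rfl

lemma gfun_one (hk : 3 ≤ n) : gfun n 1 = Real.cos (2 * Real.pi / n) := by
  rw [gfun, χ, show (1 : ZMod n) = ((1:ℤ) : ZMod n) by norm_cast, ZMod.stdAddChar_coe]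
  rw [show (2 * ↑Real.pi * I * (1:ℤ) / (n:ℂ)) = ((2 * Real.pi / n : ℝ) : ℂ) * I by
    push_cast; ring]
  exact Complex.exp_ofReal_mul_I_re _

lemma gfun_nonconst (hk : 3 ≤ n) : ¬ ∀ a b : ZMod n, gfun n a = gfun n b := by
  intro h
  have h01 := h 0 1
  rw [gfun_zero, gfun_one hk] at h01
  have hn : (0:ℝ) < n := by positivity
  have hpi := Real.pi_pos
  have h1 : 0 < 2 * Real.pi / n := by positivity
  have h2 : 2 * Real.pi / n ≤ Real.pi := by
    rw [div_le_iff₀ hn]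
    nlinarith [(show (3:ℝ) ≤ n by exact_mod_cast hk)]
  have := Real.cos_lt_cos_of_nonneg_of_le_pi le_rfl h2 h1
  rw [Real.cos_zero] at this
  linarith [h01.symm ▸ this]


end CycleAux


open CycleAux in
theorem cycle_bottom_of_spectrum (k : ℕ) [NeZero k] (hk : 3 ≤ k) :
    sInf ((fun g : ZMod k → ℝ =>
        (∑ j : ZMod k, (g (j + 1) - g j) ^ 2) /
          (2 * ∑ j : ZMod k, (g j - (∑ i : ZMod k, g i) / (k : ℝ)) ^ 2)) ''
      {g | ¬ ∀ a b, g a = g b}) = 1 - Real.cos (2 * Real.pi / k) := by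
  set lam := 1 - Real.cos (2 * Real.pi / k) with hlam
  have hkR : (0:ℝ) < k := by positivity
  set Q : (ZMod k → ℝ) → ℝ := fun g =>
    (∑ j : ZMod k, (g (j + 1) - g j) ^ 2) /
      (2 * ∑ j : ZMod k, (g j - (∑ i : ZMod k, g i) / (k : ℝ)) ^ 2) with hQ
  -- membership
  have hmem : lam ∈ Q '' {g | ¬ ∀ a b, g a = g b} := by
    refine ⟨gfun k, gfun_nonconst hk, ?_⟩
    have hmean : (∑ i : ZMod k, gfun k i) / (k : ℝ) = 0 := by
      rw [sum_gfun hk, zero_div]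
    rw [hQ]
    simp only [hmean, sub_zero]
    rw [sum_gfun_diff_sq hk, sum_gfun_sq hk, hlam]
    field_simp
  -- lower bound
  have hlb : ∀ x ∈ Q '' {g | ¬ ∀ a b, g a = g b}, lam ≤ x := by
    rintro x ⟨g, hg, rfl⟩
    set μ := (∑ i : ZMod k, g i) / (k : ℝ) with hμ
    set y : ZMod k → ℝ := fun j => g j - μ with hy
    have hysum : ∑ j : ZMod k, y j = 0 := by
      rw [hy]
      simp only
      rw [Finset.sum_sub_distrib, Finset.sum_const, Finset.card_univ, ZMod.card,
        hμ, nsmul_eq_mul]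
      field_simp
      ring
    have hD : 0 < ∑ j : ZMod k, (y j) ^ 2 := by
      rcases not_forall.mp hg with ⟨a, ha⟩
      rcases not_forall.mp ha with ⟨b, hab⟩
      have : y a ≠ 0 ∨ y b ≠ 0 := by
        by_contra h
        push_neg at h
        apply hab
        have h1 : g a = μ := sub_eq_zero.mp h.1
        have h2 : g b = μ := sub_eq_zero.mp h.2
        exact h1.trans h2.symm
      refine Finset.sum_pos' (fun j _ => sq_nonneg _) ?_
      rcases this with h | h
      · exact ⟨a, Finset.mem_univ a, by positivity⟩
      · exact ⟨b, Finset.mem_univ b, by positivity⟩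
    have hnum : ∑ j : ZMod k, (g (j + 1) - g j) ^ 2
        = ∑ j : ZMod k, (y (j + 1) - y j) ^ 2 := by
      refine Finset.sum_congr rfl fun j _ => ?_
      rw [hy]; ring
    have hkey := key_ineq hk y hysum
    rw [hQ]
    simp only
    rw [hnum]
    rw [le_div_iff₀ (by positivity)]
    have hDen : ∑ j : ZMod k, (g j - μ) ^ 2 = ∑ j : ZMod k, (y j) ^ 2 := rfl
    calc lam * (2 * ∑ j : ZMod k, (g j - μ) ^ 2)
        = (2 - 2 * Real.cos (2 * Real.pi / k)) * ∑ j : ZMod k, (y j) ^ 2 := by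
          rw [hDen, hlam]; ring
      _ ≤ _ := hkey
  exact le_antisymm (csInf_le ⟨lam, hlb⟩ hmem) (le_csInf ⟨lam, hmem⟩ hlb)
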